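/- Let G be a group, R a commutative ring, and M, N R[G]-modules. There is a bijection between H¹(G, Hom_R(M,N)) and the set of equivalence classes of extensions 0 → N → X → M → 0 of R[G]-modules that split as extensions of R-modules; the class of an extension with R-section s is the cocycle g ↦ (m ↦ α⁻¹(g·s(g⁻¹·m) − s(m))). -/

import Mathlib

universe u

variable (R : Type u) [CommRing R] (G : Type u) [Group G]
variable (M : Type u) [AddCommGroup M] [Module R M] [DistribMulAction G M] [SMulCommClass G R M]
variable (N : Type u) [AddCommGroup N] [Module R N] [DistribMulAction G N] [SMulCommClass G R N]

/-- An extension `0 → N → X → M → 0` of `R[G]`-modules that splits as an extension of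
`R`-modules (the splitting `sec` is `R`-linear). -/
structure RGExt : Type (u + 1) where
  X : Type u
  [addX : AddCommGroup X]
  [modX : Module R X]
  [actX : DistribMulAction G X]
  [commX : SMulCommClass G R X]
  ι : N →ₗ[R] X
  π : X →ₗ[R] M
  ι_equivariant : ∀ (g : G) (a : N), ι (g • a) = g • ι a
  π_equivariant : ∀ (g : G) (x : X), π (g • x) = g • π x
  inj : Function.Injective ι
  exact : ∀ x, π x = 0 ↔ x ∈ LinearMap.range ι
  sec : M →ₗ[R] X
  sec_section : ∀ m, π (sec m) = m

attribute [instance] RGExt.addX RGExt.modX RGExt.actX RGExt.commX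

/-- Equivalence of extensions: an `R[G]`-isomorphism commuting with the structure maps. -/
def ExtEquiv (E₁ E₂ : RGExt R G M N) : Prop :=
  ∃ γ : E₁.X ≃ₗ[R] E₂.X, (∀ (g : G) (x : E₁.X), γ (g • x) = g • γ x) ∧
    (∀ a : N, γ (E₁.ι a) = E₂.ι a) ∧ (∀ x : E₁.X, E₂.π (γ x) = E₁.π x)

/-- The conjugation action of `G` on `Hom_R(M,N)`: `(g·f)(m) = g • f (g⁻¹ • m)`. -/
def conjAct (g : G) (f : M →ₗ[R] N) : M →ₗ[R] N where
  toFun m := g • f (g⁻¹ • m)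
  map_add' m₁ m₂ := by simp [smul_add]
  map_smul' r m := by
    simp only [RingHom.id_apply]
    rw [smul_comm (g⁻¹) r m, map_smul, smul_comm]

/-- One-cocycles of `G` with values in `Hom_R(M,N)`. -/
def IsCocycle (c : G → (M →ₗ[R] N)) : Prop :=
  ∀ g h : G, c (g * h) = c g + conjAct R G M N g (c h)

/-- Cohomologous cocycles: they differ by a coboundary `g ↦ g·f − f`. -/
def CohEquiv (c c' : {c : G → (M →ₗ[R] N) // IsCocycle R G M N c}) : Prop :=
  ∃ f : M →ₗ[R] N, ∀ g : G, c.1 g - c'.1 g = conjAct R G M N g f - f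

section Aux

variable {R G M N}

namespace StmtAux

lemma conjAct_one (f : M →ₗ[R] N) : conjAct R G M N (1 : G) f = f := by
  ext m; simp [conjAct]

lemma cocycle_one {c : G → (M →ₗ[R] N)} (hc : IsCocycle R G M N c) : c 1 = 0 := by
  have := hc 1 1
  rw [mul_one, conjAct_one] at this
  have h3 : c 1 + c 1 = c 1 + 0 := by rw [add_zero]; exact this.symm
  exact add_left_cancel h3

/-- The auxiliary map `m ↦ g • sec (g⁻¹ • m) - sec m`. -/
def dmap (E : RGExt R G M N) (g : G) : M →ₗ[R] E.X where
  toFun m := g • E.sec (g⁻¹ • m) - E.sec m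
  map_add' m₁ m₂ := by
    simp only [smul_add, map_add]
    abel
  map_smul' r m := by
    simp only [RingHom.id_apply]
    rw [smul_comm (g⁻¹) r m, E.sec.map_smul, smul_comm g r, E.sec.map_smul, smul_sub]

lemma dmap_mem (E : RGExt R G M N) (g : G) (m : M) :
    dmap E g m ∈ LinearMap.range E.ι := by
  rw [← E.exact]
  simp [dmap, E.π_equivariant, E.sec_section]

/-- The canonical cocycle of an extension. -/
noncomputable def toCocycle (E : RGExt R G M N) (g : G) : M →ₗ[R] N :=
  (LinearEquiv.ofInjective E.ι E.inj).symm.toLinearMap ∘ₗ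
    (dmap E g).codRestrict (LinearMap.range E.ι) (dmap_mem E g)

lemma ι_toCocycle (E : RGExt R G M N) (g : G) (m : M) :
    E.ι (toCocycle E g m) = g • E.sec (g⁻¹ • m) - E.sec m := by
  set y : LinearMap.range E.ι :=
    (dmap E g).codRestrict (LinearMap.range E.ι) (dmap_mem E g) m with hy
  have h1 : E.ι ((LinearEquiv.ofInjective E.ι E.inj).symm y) = (y : E.X) := by
    have := (LinearEquiv.ofInjective E.ι E.inj).apply_symm_apply y
    have := congrArg (Subtype.val) this
    rwa [LinearEquiv.ofInjective_apply] at this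
  exact h1

lemma toCocycle_isCocycle (E : RGExt R G M N) : IsCocycle R G M N (toCocycle E) := by
  intro g h
  ext m
  apply E.inj
  have key : E.ι ((conjAct R G M N g (toCocycle E h)) m)
      = g • (h • E.sec (h⁻¹ • g⁻¹ • m) - E.sec (g⁻¹ • m)) := by
    show E.ι (g • toCocycle E h (g⁻¹ • m)) = _
    rw [E.ι_equivariant, ι_toCocycle]
  simp only [LinearMap.add_apply, map_add, key, ι_toCocycle, mul_inv_rev, mul_smul,
    smul_sub]
  abel

noncomputable def cocycleOf (E : RGExt R G M N) : {c : G → (M →ₗ[R] N) // IsCocycle R G M N c} :=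
  ⟨toCocycle E, toCocycle_isCocycle E⟩

lemma cocycleOf_unique (E : RGExt R G M N)
    (c : {c : G → (M →ₗ[R] N) // IsCocycle R G M N c})
    (h : ∀ (g : G) (m : M), E.ι (c.1 g m) = g • E.sec (g⁻¹ • m) - E.sec m) :
    cocycleOf E = c := by
  apply Subtype.ext
  funext g
  ext m
  apply E.inj
  rw [show (cocycleOf E).1 g m = toCocycle E g m from rfl, ι_toCocycle, h]

lemma cocycle_welldef {E₁ E₂ : RGExt R G M N} (h : ExtEquiv R G M N E₁ E₂) :
    CohEquiv R G M N (cocycleOf E₁) (cocycleOf E₂) := by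
  obtain ⟨γ, hγ, hι, hπ⟩ := h
  set δ : M →ₗ[R] E₂.X := γ.toLinearMap ∘ₗ E₁.sec - E₂.sec with hδ
  have hδmem : ∀ m, δ m ∈ LinearMap.range E₂.ι := by
    intro m
    rw [← E₂.exact]
    simp [hδ, hπ, E₁.sec_section, E₂.sec_section]
  set f : M →ₗ[R] N := (LinearEquiv.ofInjective E₂.ι E₂.inj).symm.toLinearMap ∘ₗ
    δ.codRestrict (LinearMap.range E₂.ι) hδmem with hf
  have hιf : ∀ m, E₂.ι (f m) = γ (E₁.sec m) - E₂.sec m := by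
    intro m
    set y : LinearMap.range E₂.ι := δ.codRestrict (LinearMap.range E₂.ι) hδmem m
    have h1 := congrArg Subtype.val
      ((LinearEquiv.ofInjective E₂.ι E₂.inj).apply_symm_apply y)
    rw [LinearEquiv.ofInjective_apply] at h1
    exact h1
  refine ⟨f, fun g => ?_⟩
  ext m
  apply E₂.inj
  have h1 : E₂.ι ((cocycleOf E₁).1 g m) = g • γ (E₁.sec (g⁻¹ • m)) - γ (E₁.sec m) := by
    rw [show (cocycleOf E₁).1 g m = toCocycle E₁ g m from rfl, ← hι, ι_toCocycle,
      map_sub, hγ]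
  have h2 : E₂.ι ((cocycleOf E₂).1 g m) = g • E₂.sec (g⁻¹ • m) - E₂.sec m :=
    ι_toCocycle E₂ g m
  have h3 : E₂.ι ((conjAct R G M N g f) m)
      = g • (γ (E₁.sec (g⁻¹ • m)) - E₂.sec (g⁻¹ • m)) := by
    show E₂.ι (g • f (g⁻¹ • m)) = _
    rw [E₂.ι_equivariant, hιf]
  simp only [LinearMap.sub_apply, map_sub, h1, h2, h3, hιf, smul_sub]
  abel

/-- The underlying type of the extension built from a cocycle. -/
def Cext (_c : {c : G → (M →ₗ[R] N) // IsCocycle R G M N c}) : Type _ := N × M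

variable (c : {c : G → (M →ₗ[R] N) // IsCocycle R G M N c})

instance : AddCommGroup (Cext c) := inferInstanceAs (AddCommGroup (N × M))
instance : Module R (Cext c) := inferInstanceAs (Module R (N × M))

def Cext.mk (n : N) (m : M) : Cext c := ((n, m) : N × M)

variable {c}

def Cext.fst (p : Cext c) : N := (show N × M from p).1
def Cext.snd (p : Cext c) : M := (show N × M from p).2

@[ext] lemma Cext.ext {p q : Cext c} (h1 : p.fst = q.fst) (h2 : p.snd = q.snd) : p = q :=
  Prod.ext h1 h2

@[simp] lemma Cext.fst_mk (n : N) (m : M) : (Cext.mk c n m).fst = n := rfl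
@[simp] lemma Cext.snd_mk (n : N) (m : M) : (Cext.mk c n m).snd = m := rfl
@[simp] lemma Cext.fst_add (p q : Cext c) : (p + q).fst = p.fst + q.fst := rfl
@[simp] lemma Cext.snd_add (p q : Cext c) : (p + q).snd = p.snd + q.snd := rfl
@[simp] lemma Cext.fst_sub (p q : Cext c) : (p - q).fst = p.fst - q.fst := rfl
@[simp] lemma Cext.snd_sub (p q : Cext c) : (p - q).snd = p.snd - q.snd := rfl
@[simp] lemma Cext.fst_zero : (0 : Cext c).fst = 0 := rfl
@[simp] lemma Cext.snd_zero : (0 : Cext c).snd = 0 := rfl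
@[simp] lemma Cext.fst_rsmul (r : R) (p : Cext c) : (r • p).fst = r • p.fst := rfl
@[simp] lemma Cext.snd_rsmul (r : R) (p : Cext c) : (r • p).snd = r • p.snd := rfl

instance : SMul G (Cext c) :=
  ⟨fun g p => Cext.mk c (g • p.fst + c.1 g (g • p.snd)) (g • p.snd)⟩

@[simp] lemma Cext.fst_gsmul (g : G) (p : Cext c) :
    (g • p).fst = g • p.fst + c.1 g (g • p.snd) := rfl
@[simp] lemma Cext.snd_gsmul (g : G) (p : Cext c) : (g • p).snd = g • p.snd := rfl

instance : DistribMulAction G (Cext c) where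
  one_smul p := by
    ext <;> simp [cocycle_one c.2]
  mul_smul g h p := by
    have key : c.1 (g * h) (g • h • p.snd)
        = c.1 g (g • h • p.snd) + g • c.1 h (h • p.snd) := by
      rw [c.2 g h]
      simp only [LinearMap.add_apply]
      congr 1
      show g • c.1 h (g⁻¹ • g • h • p.snd) = _
      rw [inv_smul_smul]
    ext <;> simp [key, mul_smul, smul_add] <;> abel
  smul_zero g := by ext <;> simp
  smul_add g p q := by ext <;> simp [smul_add] <;> abel

instance : SMulCommClass G R (Cext c) where
  smul_comm g r p := by
    ext
    · simp only [Cext.fst_gsmul, Cext.fst_rsmul, Cext.snd_rsmul]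
      rw [smul_comm g r p.fst, smul_comm g r p.snd, map_smul, smul_add]
    · simp only [Cext.snd_gsmul, Cext.snd_rsmul]
      rw [smul_comm]

variable (c)

/-- The extension built from a cocycle. -/
def extOf : RGExt R G M N where
  X := Cext c
  ι :=
    { toFun := fun n => Cext.mk c n 0
      map_add' := fun a b => by ext <;> simp
      map_smul' := fun r a => by ext <;> simp }
  π :=
    { toFun := fun p => Cext.snd p
      map_add' := fun a b => by simp
      map_smul' := fun r a => by simp }
  ι_equivariant g a := by ext <;> simp
  π_equivariant g x := rfl
  inj a b h := by
    have := congrArg (Cext.fst (c := c)) h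
    simpa using this
  exact x := by
    constructor
    · intro hx
      have hx' : Cext.snd x = 0 := hx
      exact ⟨Cext.fst x, by ext <;> simp [hx']⟩
    · rintro ⟨n, rfl⟩
      rfl
  sec :=
    { toFun := fun m => Cext.mk c 0 m
      map_add' := fun a b => by ext <;> simp
      map_smul' := fun r a => by ext <;> simp }
  sec_section m := rfl

lemma cocycleOf_extOf : cocycleOf (extOf c) = c := by
  apply cocycleOf_unique
  intro g m
  show Cext.mk c (c.1 g m) 0 = g • Cext.mk c 0 (g⁻¹ • m) - Cext.mk c 0 m
  ext <;> simp [← mul_smul]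

lemma ext_welldef {c c' : {c : G → (M →ₗ[R] N) // IsCocycle R G M N c}}
    (h : CohEquiv R G M N c c') : ExtEquiv R G M N (extOf c) (extOf c') := by
  obtain ⟨f, hf⟩ := h
  let γ : Cext c ≃ₗ[R] Cext c' := LinearEquiv.ofLinear
    { toFun := fun p => Cext.mk c' (Cext.fst p + f (Cext.snd p)) (Cext.snd p)
      map_add' := fun p q => by refine Cext.ext ?_ ?_ <;> simp <;> abel
      map_smul' := fun r p => by refine Cext.ext ?_ ?_ <;> simp [smul_add] }
    { toFun := fun p => Cext.mk c (Cext.fst p - f (Cext.snd p)) (Cext.snd p)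
      map_add' := fun p q => by refine Cext.ext ?_ ?_ <;> simp <;> abel
      map_smul' := fun r p => by refine Cext.ext ?_ ?_ <;> simp [smul_sub] }
    (by refine LinearMap.ext fun p => Cext.ext ?_ ?_ <;> simp)
    (by refine LinearMap.ext fun p => Cext.ext ?_ ?_ <;> simp)
  refine ⟨γ, ?_, ?_, ?_⟩
  · intro g p
    have key : c.1 g (g • Cext.snd (c := c) p) + f (g • Cext.snd (c := c) p)
        = g • f (Cext.snd (c := c) p) + c'.1 g (g • Cext.snd (c := c) p) := by
      have h1 := congrArg (fun φ => φ (g • Cext.snd (c := c) p)) (hf g)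
      simp only [LinearMap.sub_apply] at h1
      have h2 : (conjAct R G M N g f) (g • Cext.snd (c := c) p)
          = g • f (Cext.snd (c := c) p) := by
        show g • f (g⁻¹ • g • Cext.snd (c := c) p) = _
        rw [← mul_smul, inv_mul_cancel, one_smul]
      rw [h2, sub_eq_sub_iff_add_eq_add] at h1
      exact h1
    refine Cext.ext (c := c') ?_ ?_
    · show g • Cext.fst (c := c) p + c.1 g (g • Cext.snd (c := c) p)
          + f (g • Cext.snd (c := c) p)
        = g • (Cext.fst (c := c) p + f (Cext.snd (c := c) p))
          + c'.1 g (g • Cext.snd (c := c) p)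
      rw [smul_add, add_assoc, key]
      abel
    · rfl
  · intro a
    show Cext.mk c' (Cext.fst (Cext.mk c a 0) + f (Cext.snd (Cext.mk c a 0)))
        (Cext.snd (Cext.mk c a 0)) = Cext.mk c' a 0
    refine Cext.ext ?_ ?_ <;> simp
  · intro x
    rfl

lemma extOf_cocycleOf (E : RGExt R G M N) : ExtEquiv R G M N (extOf (cocycleOf E)) E := by
  set c := cocycleOf E with hc
  let φ : Cext c →ₗ[R] E.X :=
    { toFun := fun p => E.ι (Cext.fst p) + E.sec (Cext.snd p)
      map_add' := fun p q => by simp only [Cext.fst_add, Cext.snd_add, map_add]; abel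
      map_smul' := fun r p => by
        simp only [Cext.fst_rsmul, Cext.snd_rsmul, map_smul, RingHom.id_apply, smul_add] }
  have hφ : ∀ p, φ p = E.ι (Cext.fst p) + E.sec (Cext.snd p) := fun _ => rfl
  have hbij : Function.Bijective φ := by
    constructor
    · intro p q hpq
      rw [hφ, hφ] at hpq
      have hsnd : Cext.snd p = Cext.snd q := by
        have := congrArg E.π hpq
        simpa [map_add, E.sec_section,
          (E.exact _).mpr ⟨Cext.fst p, rfl⟩, (E.exact _).mpr ⟨Cext.fst q, rfl⟩] using this
      have hfst : Cext.fst p = Cext.fst q := by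
        apply E.inj
        rw [hsnd] at hpq
        exact add_right_cancel hpq
      exact Cext.ext hfst hsnd
    · intro x
      have hmem : x - E.sec (E.π x) ∈ LinearMap.range E.ι := by
        rw [← E.exact]; simp [E.sec_section]
      obtain ⟨n, hn⟩ := hmem
      refine ⟨Cext.mk c n (E.π x), ?_⟩
      rw [hφ]
      simp [hn]
  refine ⟨LinearEquiv.ofBijective φ hbij, ?_, ?_, ?_⟩
  · intro g (p : Cext c)
    show φ (g • p) = g • φ p
    rw [hφ, hφ, Cext.fst_gsmul, Cext.snd_gsmul, map_add, E.ι_equivariant]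
    have h1 : E.ι (c.1 g (g • Cext.snd (c := c) p))
        = g • E.sec (g⁻¹ • g • Cext.snd (c := c) p)
        - E.sec (g • Cext.snd (c := c) p) := by
      rw [hc]; exact ι_toCocycle E g _
    rw [h1, ← mul_smul, inv_mul_cancel, one_smul, smul_add]
    abel
  · intro a
    show φ (Cext.mk c a 0) = E.ι a
    rw [hφ]
    simp
  · intro (p : Cext c)
    show E.π (φ p) = Cext.snd (c := c) p
    rw [hφ]
    simp [map_add, (E.exact _).mpr ⟨Cext.fst (c := c) p, rfl⟩, E.sec_section]

end StmtAux

end Aux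

/-- There is a bijection between `H¹(G, Hom_R(M,N))` and the set of equivalence classes of
extensions `0 → N → X → M → 0` of `R[G]`-modules that split as extensions of `R`-modules;
the class of an extension with `R`-section `s` is the cocycle
`g ↦ (m ↦ ι⁻¹(g • s(g⁻¹ • m) − s(m)))`. -/
theorem stmt_7 :
    ∃ e : Quot (ExtEquiv R G M N) ≃ Quot (CohEquiv R G M N),
      ∀ (E : RGExt R G M N) (c : {c : G → (M →ₗ[R] N) // IsCocycle R G M N c}),
        (∀ (g : G) (m : M), E.ι (c.1 g m) = g • E.sec (g⁻¹ • m) - E.sec m) →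
          e (Quot.mk _ E) = Quot.mk _ c := by
  refine ⟨⟨Quot.lift (fun E => Quot.mk _ (StmtAux.cocycleOf E))
      (fun a b h => Quot.sound (StmtAux.cocycle_welldef h)),
    Quot.lift (fun c => Quot.mk _ (StmtAux.extOf c))
      (fun a b h => Quot.sound (StmtAux.ext_welldef h)), ?_, ?_⟩, ?_⟩
  · intro q
    induction q using Quot.ind with
    | _ E => exact Quot.sound (StmtAux.extOf_cocycleOf E)
  · intro q
    induction q using Quot.ind with
    | _ c => exact congrArg (Quot.mk _) (StmtAux.cocycleOf_extOf c)
  · intro E c h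
    exact congrArg (Quot.mk _) (StmtAux.cocycleOf_unique E c h)
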